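/- For every θ ∈ ℝ there exist two-qubit gates G₁, G₃ ∈ K_BC and G₂, G₄ ∈ K_AC such that G₄ G₃ G₂ G₁ = V(−θ,θ) = diag(1,1,1,1,1,1,e^{−iθ},e^{iθ}). (Concretely, one may take G₁ = U_BC†, G₂ = the controlled gate |0⟩⟨0|_A ⊗ I + |1⟩⟨1|_A ⊗ W_C with W = diag(e^{−iθ/2}, e^{iθ/2}), G₃ = U_BC, G₄ = G₂, where U_BC is any 4×4 unitary on B,C with U_BC (I_B ⊗ W_C) U_BC† = diag(e^{iθ/2}, e^{−iθ/2}, e^{−iθ/2}, e^{iθ/2}).) -/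

import Mathlib

open Matrix

/-- The three-qubit index type: basis states `|abc⟩` for qubits `A`, `B`, `C`. -/
abbrev Q3 : Type := Fin 2 × Fin 2 × Fin 2

noncomputable section

/-- Class `K_AB`: two-qubit gates acting on qubits `A` and `B` (i.e. of the form `U ⊗ I₂`). -/
def IsKAB (M : Matrix Q3 Q3 ℂ) : Prop :=
  ∃ U ∈ Matrix.unitaryGroup (Fin 2 × Fin 2) ℂ,
    ∀ a b c a' b' c' : Fin 2,
      M (a, b, c) (a', b', c') = U (a, b) (a', b') * (if c = c' then 1 else 0)

/-- Class `K_BC`: two-qubit gates acting on qubits `B` and `C` (i.e. of the form `I₂ ⊗ U`). -/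
def IsKBC (M : Matrix Q3 Q3 ℂ) : Prop :=
  ∃ U ∈ Matrix.unitaryGroup (Fin 2 × Fin 2) ℂ,
    ∀ a b c a' b' c' : Fin 2,
      M (a, b, c) (a', b', c') = (if a = a' then 1 else 0) * U (b, c) (b', c')

/-- Class `K_AC`: two-qubit gates acting on qubits `A` and `C`
(i.e. of the form `(I₂ ⊗ S)(U ⊗ I₂)(I₂ ⊗ S)`). -/
def IsKAC (M : Matrix Q3 Q3 ℂ) : Prop :=
  ∃ U ∈ Matrix.unitaryGroup (Fin 2 × Fin 2) ℂ,
    ∀ a b c a' b' c' : Fin 2,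
      M (a, b, c) (a', b', c') = U (a, c) (a', c') * (if b = b' then 1 else 0)

/-- A two-qubit gate on three qubits: an element of `K_AB ∪ K_AC ∪ K_BC`. -/
def IsTwoQubitGate (M : Matrix Q3 Q3 ℂ) : Prop := IsKAB M ∨ IsKAC M ∨ IsKBC M

/-- `M` can be written as a product of at most `k` two-qubit gates. -/
def ProdOfGates (k : ℕ) (M : Matrix Q3 Q3 ℂ) : Prop :=
  ∃ L : List (Matrix Q3 Q3 ℂ), L.length ≤ k ∧ (∀ G ∈ L, IsTwoQubitGate G) ∧ L.prod = M

/-- The gate `V(θ₁,θ₂) = diag(1,1,1,1,1,1,e^{iθ₁},e^{iθ₂})`. -/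
def Vgate (θ₁ θ₂ : ℝ) : Matrix Q3 Q3 ℂ :=
  Matrix.diagonal fun x =>
    if x = (1, 1, 0) then Complex.exp (θ₁ * Complex.I)
    else if x = (1, 1, 1) then Complex.exp (θ₂ * Complex.I) else 1

/-- The Fredkin gate: `F|0bc⟩ = |0bc⟩`, `F|1bc⟩ = |1cb⟩`. -/
def Fredkin : Matrix Q3 Q3 ℂ :=
  Matrix.of fun x y => if x = (if y.1 = 1 then (y.1, y.2.2, y.2.1) else y) then 1 else 0


/-- permutation on BC: swaps c when b = 0 -/
def UBC : Matrix (Fin 2 × Fin 2) (Fin 2 × Fin 2) ℂ :=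
  Matrix.of fun x y => if x = (y.1, if y.1 = 0 then y.2 + 1 else y.2) then 1 else 0

def UAC (θ : ℝ) : Matrix (Fin 2 × Fin 2) (Fin 2 × Fin 2) ℂ :=
  Matrix.of fun x y => if x = y then
    (if x.1 = 1 then Complex.exp ((if x.2 = 0 then (-(θ/2) : ℝ) else θ/2) * Complex.I) else 1)
    else 0

lemma UBC_mem : UBC ∈ Matrix.unitaryGroup (Fin 2 × Fin 2) ℂ := by
  rw [Matrix.mem_unitaryGroup_iff']
  ext ⟨b, c⟩ ⟨b', c'⟩
  fin_cases b <;> fin_cases c <;> fin_cases b' <;> fin_cases c' <;>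
    simp [Matrix.mul_apply, Fintype.sum_prod_type, Fin.sum_univ_two, UBC,
      Matrix.one_apply, star_apply] <;>
    first
      | decide
      | rw [if_neg (by decide)]

lemma UAC_mem (θ : ℝ) : UAC θ ∈ Matrix.unitaryGroup (Fin 2 × Fin 2) ℂ := by
  rw [Matrix.mem_unitaryGroup_iff']
  have h : ∀ r : ℝ, (starRingEnd ℂ) (Complex.exp (r * Complex.I)) * Complex.exp (r * Complex.I) = 1 := by
    intro r
    rw [← Complex.exp_conj, ← Complex.exp_add]
    simp [Complex.ext_iff]
  ext ⟨a, c⟩ ⟨a', c'⟩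
  fin_cases a <;> fin_cases c <;> fin_cases a' <;> fin_cases c' <;>
    simp [Matrix.mul_apply, Fintype.sum_prod_type, Fin.sum_univ_two, UAC,
      Matrix.one_apply, star_apply, h] <;>
    first
      | decide
      | rw [if_neg (by decide)]
      | (rw [← Complex.exp_conj, ← Complex.exp_add, ← Complex.exp_zero]
         congr 1
         norm_num [Complex.ext_iff, Complex.div_im, Complex.div_re]
         ring)

def GBC : Matrix Q3 Q3 ℂ :=
  Matrix.of fun x y => (if x.1 = y.1 then 1 else 0) * UBC (x.2.1, x.2.2) (y.2.1, y.2.2)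

def GAC (θ : ℝ) : Matrix Q3 Q3 ℂ :=
  Matrix.of fun x y => UAC θ (x.1, x.2.2) (y.1, y.2.2) * (if x.2.1 = y.2.1 then 1 else 0)

def dval (θ : ℝ) (x : Q3) : ℂ :=
  if x.1 = 1 then Complex.exp ((if x.2.2 = 0 then (-(θ/2) : ℝ) else θ/2) * Complex.I) else 1

def M1 (θ : ℝ) : Matrix Q3 Q3 ℂ :=
  Matrix.of fun x y =>
    if x = (y.1, y.2.1, if y.2.1 = 0 then y.2.2 + 1 else y.2.2) then dval θ x else 0


def sig (y : Q3) : Q3 := (y.1, y.2.1, if y.2.1 = 0 then y.2.2 + 1 else y.2.2)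

lemma M1_apply (θ : ℝ) (x y : Q3) : M1 θ x y = if x = sig y then dval θ x else 0 := rfl

lemma sig_sig (y : Q3) : sig (sig y) = y := by
  obtain ⟨a, b, c⟩ := y
  fin_cases b <;> fin_cases c <;> simp [sig]


lemma sig_eq_iff (x y : Q3) : x = sig y ↔ y = sig x := by
  constructor <;> (rintro rfl; rw [sig_sig])

lemma GAC_eq (θ : ℝ) : GAC θ = Matrix.diagonal (dval θ) := by
  ext ⟨a, b, c⟩ ⟨a', b', c'⟩
  by_cases h1 : a = a' <;> by_cases h2 : b = b' <;> by_cases h3 : c = c' <;>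
    simp [GAC, UAC, dval, Matrix.diagonal_apply, Prod.ext_iff, h1, h2, h3]

lemma GBC_apply (x y : Q3) : GBC x y = if x = sig y then 1 else 0 := by
  obtain ⟨a, b, c⟩ := x; obtain ⟨a', b', c'⟩ := y
  by_cases h1 : a = a' <;> by_cases h2 : b = b' <;>
      by_cases h3 : c = (if b' = 0 then c' + 1 else c') <;>
    simp [GBC, UBC, sig, Prod.ext_iff, h1, h2, h3]

lemma step (θ : ℝ) : GAC θ * GBC = M1 θ := by
  rw [GAC_eq]
  ext x y
  rw [Matrix.diagonal_mul, GBC_apply, M1_apply]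
  show dval θ x * (if x = sig y then 1 else 0) = _
  split <;> simp

lemma final (θ : ℝ) : M1 θ * M1 θ = Vgate (-θ) θ := by
  ext x y
  rw [Matrix.mul_apply]
  have h1 : ∀ z, M1 θ x z = if z = sig x then dval θ x else 0 := by
    intro z; rw [M1_apply]
    by_cases h : z = sig x
    · rw [if_pos ((sig_eq_iff x z).mpr h), if_pos h]
    · rw [if_neg (fun hh => h ((sig_eq_iff x z).mp hh)), if_neg h]
  simp only [h1, ite_mul, zero_mul, Finset.sum_ite_eq', Finset.mem_univ, if_true]
  rw [M1_apply]
  have h2 : (sig x = sig y) ↔ x = y := by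
    constructor
    · intro h; rw [← sig_sig x, h, sig_sig]
    · rintro rfl; rfl
  rw [show Vgate (-θ) θ x y = if x = y then (if x = ((1:Fin 2), (1:Fin 2), (0:Fin 2)) then Complex.exp ((-θ : ℝ) * Complex.I)
      else if x = (1, 1, 1) then Complex.exp ((θ : ℝ) * Complex.I) else 1) else 0 from by
    rw [Vgate, Matrix.diagonal_apply]]
  simp only [h2]
  by_cases hxy : x = y
  · subst hxy
    simp only [if_pos rfl]
    obtain ⟨a, b, c⟩ := x
    fin_cases a <;> fin_cases b <;> fin_cases c <;>
      simp [sig, dval, ← Complex.exp_add] <;>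
      first
        | (rw [← Complex.exp_zero]; try congr 1; try push_cast; try ring; done)
        | (congr 1; try push_cast; try ring; done)
        | (rw [if_neg (by decide)]; try congr 1; try push_cast; try ring; done)
  · simp [hxy]

/-- For every `θ`, there are two-qubit gates `G₁, G₃ ∈ K_BC` and `G₂, G₄ ∈ K_AC` such that
`G₄ G₃ G₂ G₁ = V(−θ,θ)` (rightmost factor applied first). -/
theorem Vgate_minus_theta_theta_four_gates (θ : ℝ) :
    ∃ G₁ G₂ G₃ G₄ : Matrix Q3 Q3 ℂ,
      IsKBC G₁ ∧ IsKAC G₂ ∧ IsKBC G₃ ∧ IsKAC G₄ ∧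
      G₄ * G₃ * G₂ * G₁ = Vgate (-θ) θ := by
  refine ⟨GBC, GAC θ, GBC, GAC θ, ⟨UBC, UBC_mem, fun a b c a' b' c' => rfl⟩,
    ⟨UAC θ, UAC_mem θ, fun a b c a' b' c' => rfl⟩,
    ⟨UBC, UBC_mem, fun a b c a' b' c' => rfl⟩,
    ⟨UAC θ, UAC_mem θ, fun a b c a' b' c' => rfl⟩, ?_⟩
  rw [mul_assoc (GAC θ * GBC), step, final]

end
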